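/- Let I, X_1, ..., X_n be jointly distributed discrete random variables such that I is determined by (X_1, ..., X_n), i.e., H(I | X_1,...,X_n) = 0. Fix 0 ≤ k < n and let ε = (1/binom(n,k)) ∑_{J ⊆ {1,...,n}, |J|=k} I(I; (X_i : i ∈ J)) be the average mutual information revealed by k of the variables. Then (1/n) ∑_{i=1}^n H(X_i) ≥ (H(I) - ε)/(n - k). -/

import Mathlib

open Finset Real
open scoped Classical

/-- `P(X = a)` for a random variable `X` on the finite weighted space `(Ω, μ)`. -/
noncomputable def probOf {Ω α : Type*} [Fintype Ω] (μ : Ω → ℝ) (X : Ω → α) (a : α) : ℝ :=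
  ∑ ω, if X ω = a then μ ω else 0

/-- Shannon entropy (in bits). -/
noncomputable def entropy {Ω α : Type*} [Fintype Ω] [Fintype α] (μ : Ω → ℝ) (X : Ω → α) : ℝ :=
  -∑ a, probOf μ X a * Real.logb 2 (probOf μ X a)

/-- Mutual information `I(X;Y) = H(X) + H(Y) - H(X,Y)` (in bits). -/
noncomputable def mutualInfo {Ω α β : Type*} [Fintype Ω] [Fintype α] [Fintype β]
    (μ : Ω → ℝ) (X : Ω → α) (Y : Ω → β) : ℝ :=
  entropy μ X + entropy μ Y - entropy μ (fun ω => (X ω, Y ω))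

/-- Conditional entropy `H(X | Y) = H(X,Y) - H(Y)` (in bits). -/
noncomputable def condEntropyOf {Ω α β : Type*} [Fintype Ω] [Fintype α] [Fintype β]
    (μ : Ω → ℝ) (X : Ω → α) (Y : Ω → β) : ℝ :=
  entropy μ (fun ω => (X ω, Y ω)) - entropy μ Y

section
variable {Ω α β : Type*} [Fintype Ω] (μ : Ω → ℝ)

lemma probOf_nonneg (hμ0 : ∀ ω, 0 ≤ μ ω) (X : Ω → α) (a : α) : 0 ≤ probOf μ X a :=
  Finset.sum_nonneg fun ω _ => by by_cases h : X ω = a <;> simp [probOf, h, hμ0 ω]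

lemma sum_probOf [Fintype α] (X : Ω → α) : ∑ a, probOf μ X a = ∑ ω, μ ω := by
  unfold probOf
  rw [Finset.sum_comm]
  simp

lemma probOf_fst [Fintype β] (X : Ω → α) (Y : Ω → β) (a : α) :
    ∑ b, probOf μ (fun ω => (X ω, Y ω)) (a, b) = probOf μ X a := by
  unfold probOf
  rw [Finset.sum_comm]
  congr 1; ext ω
  simp [Prod.ext_iff, ite_and]

lemma probOf_snd [Fintype α] (X : Ω → α) (Y : Ω → β) (b : β) :
    ∑ a, probOf μ (fun ω => (X ω, Y ω)) (a, b) = probOf μ Y b := by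
  unfold probOf
  rw [Finset.sum_comm]
  congr 1; ext ω
  simp [Prod.ext_iff, ite_and]

lemma probOf_comp [Fintype α] (X : Ω → α) (f : α → β) (b : β) :
    probOf μ (fun ω => f (X ω)) b = ∑ a ∈ univ.filter (fun a => f a = b), probOf μ X a := by
  unfold probOf
  rw [Finset.sum_comm]
  congr 1; ext ω
  rw [Finset.sum_ite_eq (univ.filter (fun a => f a = b)) (X ω) (fun _ => μ ω)]
  simp

end

section
variable {Ω α β : Type*} [Fintype Ω] (μ : Ω → ℝ)

lemma entropy_comp_le [Fintype α] [Fintype β] (hμ0 : ∀ ω, 0 ≤ μ ω) (X : Ω → α) (f : α → β) :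
    entropy μ (fun ω => f (X ω)) ≤ entropy μ X := by
  unfold entropy
  rw [neg_le_neg_iff]
  rw [← Finset.sum_fiberwise (univ : Finset α) f (fun a => probOf μ X a * Real.logb 2 (probOf μ X a))]
  refine Finset.sum_le_sum fun b _ => ?_
  have hq : probOf μ (fun ω => f (X ω)) b = ∑ a ∈ univ.filter (fun a => f a = b), probOf μ X a :=
    probOf_comp μ X f b
  calc ∑ a ∈ univ.filter (fun a => f a = b), probOf μ X a * Real.logb 2 (probOf μ X a)
      ≤ ∑ a ∈ univ.filter (fun a => f a = b),
          probOf μ X a * Real.logb 2 (probOf μ (fun ω => f (X ω)) b) := by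
        refine Finset.sum_le_sum fun a ha => ?_
        rcases eq_or_lt_of_le (probOf_nonneg μ hμ0 X a) with h0 | h0
        · simp [← h0]
        · refine mul_le_mul_of_nonneg_left ?_ (le_of_lt h0)
          refine Real.logb_le_logb_of_le one_lt_two h0 ?_
          rw [hq]
          exact Finset.single_le_sum (fun a _ => probOf_nonneg μ hμ0 X a) ha
    _ = probOf μ (fun ω => f (X ω)) b * Real.logb 2 (probOf μ (fun ω => f (X ω)) b) := by
        rw [← Finset.sum_mul, ← hq]

lemma entropy_pair_le [Fintype α] [Fintype β] (hμ0 : ∀ ω, 0 ≤ μ ω) (hμ1 : ∑ ω, μ ω = 1)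
    (X : Ω → α) (Y : Ω → β) :
    entropy μ (fun ω => (X ω, Y ω)) ≤ entropy μ X + entropy μ Y := by
  have hl2 : (0:ℝ) < Real.log 2 := Real.log_pos one_lt_two
  set r := probOf μ (fun ω => (X ω, Y ω)) with hrdef
  set p := probOf μ X with hpdef
  set q := probOf μ Y with hqdef
  have hr0 : ∀ c, 0 ≤ r c := probOf_nonneg μ hμ0 _
  have hp0 : ∀ a, 0 ≤ p a := probOf_nonneg μ hμ0 _
  have hq0 : ∀ b, 0 ≤ q b := probOf_nonneg μ hμ0 _
  have hrp : ∀ c : α × β, r c ≤ p c.1 := fun c => by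
    rw [hpdef, ← probOf_fst μ X Y c.1]
    exact Finset.single_le_sum (fun b _ => hr0 (c.1, b)) (mem_univ c.2)
  have hrq : ∀ c : α × β, r c ≤ q c.2 := fun c => by
    rw [hqdef, ← probOf_snd μ X Y c.2]
    exact Finset.single_le_sum (fun a _ => hr0 (a, c.2)) (mem_univ c.1)
  have hr1 : ∑ c, r c = 1 := by rw [hrdef, sum_probOf, hμ1]
  have hp1 : ∑ a, p a = 1 := by rw [hpdef, sum_probOf, hμ1]
  have hq1 : ∑ b, q b = 1 := by rw [hqdef, sum_probOf, hμ1]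
  have key : ∀ c : α × β,
      r c * Real.logb 2 (p c.1) + r c * Real.logb 2 (q c.2) - r c * Real.logb 2 (r c)
        ≤ (p c.1 * q c.2 - r c) / Real.log 2 := by
    intro c
    rcases eq_or_lt_of_le (hr0 c) with h0 | h0
    · rw [← h0]
      have h := mul_nonneg (hp0 c.1) (hq0 c.2)
      have h2 : (0:ℝ) ≤ p c.1 * q c.2 / Real.log 2 := div_nonneg h hl2.le
      simpa using h2
    · have hp : 0 < p c.1 := lt_of_lt_of_le h0 (hrp c)
      have hq : 0 < q c.2 := lt_of_lt_of_le h0 (hrq c)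
      have hlog : Real.log (p c.1 * q c.2 / r c) ≤ p c.1 * q c.2 / r c - 1 :=
        Real.log_le_sub_one_of_pos (by positivity)
      have e : Real.logb 2 (p c.1) + Real.logb 2 (q c.2) - Real.logb 2 (r c)
          = Real.log (p c.1 * q c.2 / r c) / Real.log 2 := by
        rw [Real.log_div (by positivity) h0.ne', Real.log_mul hp.ne' hq.ne']
        simp only [Real.logb]
        ring
      calc r c * Real.logb 2 (p c.1) + r c * Real.logb 2 (q c.2) - r c * Real.logb 2 (r c)
          = r c * (Real.log (p c.1 * q c.2 / r c) / Real.log 2) := by rw [← e]; ring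
        _ ≤ r c * ((p c.1 * q c.2 / r c - 1) / Real.log 2) := by gcongr
        _ = (p c.1 * q c.2 - r c) / Real.log 2 := by field_simp
  have hA : ∑ a, p a * Real.logb 2 (p a) = ∑ c : α × β, r c * Real.logb 2 (p c.1) := by
    rw [Fintype.sum_prod_type]
    refine Finset.sum_congr rfl fun a _ => ?_
    dsimp only
    rw [← Finset.sum_mul]
    congr 1
    rw [hpdef, ← probOf_fst μ X Y a]
  have hB : ∑ b, q b * Real.logb 2 (q b) = ∑ c : α × β, r c * Real.logb 2 (q c.2) := by
    rw [Fintype.sum_prod_type, Finset.sum_comm]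
    refine Finset.sum_congr rfl fun b _ => ?_
    dsimp only
    rw [← Finset.sum_mul]
    congr 1
    rw [hqdef, ← probOf_snd μ X Y b]
  have hpq : ∑ c : α × β, p c.1 * q c.2 = 1 := by
    rw [Fintype.sum_prod_type, ← Finset.sum_mul_sum, hp1, hq1, mul_one]
  have hsumkey := Finset.sum_le_sum (fun c (_ : c ∈ (univ : Finset (α × β))) => key c)
  rw [Finset.sum_sub_distrib, Finset.sum_add_distrib, ← Finset.sum_div,
    Finset.sum_sub_distrib, hpq, hr1, sub_self, zero_div] at hsumkey
  unfold entropy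
  rw [← hrdef, ← hpdef, ← hqdef]
  linarith [hsumkey, hA, hB]

lemma entropy_of_subsingleton [Fintype β] [Subsingleton β] (hμ1 : ∑ ω, μ ω = 1) (X : Ω → β) :
    entropy μ X = 0 := by
  unfold entropy
  rcases isEmpty_or_nonempty β with h | h
  · simp
  · obtain ⟨b⟩ := h
    rw [Fintype.sum_subsingleton _ b]
    have : probOf μ X b = 1 := by
      unfold probOf
      rw [← hμ1]
      exact Finset.sum_congr rfl fun ω _ => by simp [Subsingleton.elim (X ω) b]
    simp [this]

end

section
variable {Ω α : Type*} [Fintype Ω] (μ : Ω → ℝ)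

lemma entropy_tuple_le [Fintype α] (hμ0 : ∀ ω, 0 ≤ μ ω) (hμ1 : ∑ ω, μ ω = 1)
    {n : ℕ} (X : Fin n → Ω → α) (T : Finset (Fin n)) :
    entropy μ (fun ω (i : {x // x ∈ T}) => X i.1 ω) ≤ ∑ i ∈ T, entropy μ (X i) := by
  induction T using Finset.induction_on with
  | empty =>
      rw [Finset.sum_empty]
      have : Subsingleton ({x // x ∈ (∅ : Finset (Fin n))} → α) := by
        have : IsEmpty {x // x ∈ (∅ : Finset (Fin n))} := by
          constructor; rintro ⟨x, hx⟩; simp at hx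
        infer_instance
      exact le_of_eq (entropy_of_subsingleton μ hμ1 _)
  | @insert a s ha ih =>
      rw [Finset.sum_insert ha]
      set g : α × ({x // x ∈ s} → α) → ({x // x ∈ insert a s} → α) := fun vw i =>
        if h : i.1 = a then vw.1 else vw.2 ⟨i.1, (Finset.mem_insert.mp i.2).resolve_left h⟩
        with hg
      have hgX : (fun ω (i : {x // x ∈ insert a s}) => X i.1 ω)
          = fun ω => g (X a ω, fun i : {x // x ∈ s} => X i.1 ω) := by
        funext ω
        funext i
        rw [hg]
        by_cases h : i.1 = a
        · simp [h]
        · simp [h]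
      calc entropy μ (fun ω (i : {x // x ∈ insert a s}) => X i.1 ω)
          = entropy μ (fun ω => g ((fun ω' => (X a ω', fun i : {x // x ∈ s} => X i.1 ω')) ω)) := by
            rw [hgX]
        _ ≤ entropy μ (fun ω => (X a ω, fun i : {x // x ∈ s} => X i.1 ω)) :=
            entropy_comp_le μ hμ0 _ g
        _ ≤ entropy μ (X a) + entropy μ (fun ω (i : {x // x ∈ s}) => X i.1 ω) :=
            entropy_pair_le μ hμ0 hμ1 _ _
        _ ≤ entropy μ (X a) + ∑ i ∈ s, entropy μ (X i) := by linarith [ih]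

end


lemma step_J {Ω S α : Type*} [Fintype Ω] [Fintype S] [Fintype α]
    (μ : Ω → ℝ) (hμ0 : ∀ ω, 0 ≤ μ ω) (hμ1 : ∑ ω, μ ω = 1)
    {n : ℕ} (I : Ω → S) (X : Fin n → Ω → α)
    (hdet : condEntropyOf μ I (fun ω (i : Fin n) => X i ω) = 0) (J : Finset (Fin n)) :
    entropy μ I - mutualInfo μ I (fun ω (i : {x // x ∈ J}) => X i.1 ω)
      ≤ ∑ i ∈ univ \ J, entropy μ (X i) := by
  set W : Ω → (Fin n → α) := fun ω i => X i ω with hW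
  set Y : Ω → ({x // x ∈ J} → α) := fun ω i => X i.1 ω with hY
  set Z : Ω → ({x // x ∈ univ \ J} → α) := fun ω i => X i.1 ω with hZ
  have h1 : entropy μ (fun ω => (I ω, Y ω)) ≤ entropy μ (fun ω => (I ω, W ω)) := by
    have e : (fun ω => (I ω, Y ω)) = fun ω =>
        (fun sw : S × (Fin n → α) => (sw.1, fun i : {x // x ∈ J} => sw.2 i.1))
          ((fun ω' => (I ω', W ω')) ω) := rfl
    rw [e]
    exact entropy_comp_le μ hμ0 (fun ω => (I ω, W ω))
      (fun sw : S × (Fin n → α) => (sw.1, fun i : {x // x ∈ J} => sw.2 i.1))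
  have h2 : entropy μ (fun ω => (I ω, W ω)) = entropy μ W := by
    unfold condEntropyOf at hdet
    linarith [hdet]
  have h3 : entropy μ W ≤ entropy μ (fun ω => (Y ω, Z ω)) := by
    set g : ({x // x ∈ J} → α) × ({x // x ∈ univ \ J} → α) → (Fin n → α) := fun yz i =>
      if h : i ∈ J then yz.1 ⟨i, h⟩ else yz.2 ⟨i, by simp [h]⟩ with hg
    have e : W = fun ω => g ((fun ω' => (Y ω', Z ω')) ω) := by
      funext ω
      funext i
      rw [hg]
      by_cases h : i ∈ J <;> simp [h, hW, hY, hZ]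
    rw [e]
    exact entropy_comp_le μ hμ0 _ g
  have h4 : entropy μ (fun ω => (Y ω, Z ω)) ≤ entropy μ Y + entropy μ Z :=
    entropy_pair_le μ hμ0 hμ1 Y Z
  have h5 : entropy μ Z ≤ ∑ i ∈ univ \ J, entropy μ (X i) :=
    entropy_tuple_le μ hμ0 hμ1 X (univ \ J)
  unfold mutualInfo
  linarith

/-- Entropy/communication trade-off: if `I` is determined by `(X_1,…,X_n)` and
`ε` is the average mutual information revealed by `k` of the variables, then
`(1/n) ∑ H(X_i) ≥ (H(I) - ε)/(n - k)`. -/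
theorem avg_entropy_tradeoff {Ω S α : Type*} [Fintype Ω] [Fintype S] [Fintype α]
    (μ : Ω → ℝ) (hμ0 : ∀ ω, 0 ≤ μ ω) (hμ1 : ∑ ω, μ ω = 1)
    (n k : ℕ) (hk : k < n)
    (I : Ω → S) (X : Fin n → Ω → α)
    (hdet : condEntropyOf μ I (fun ω (i : Fin n) => X i ω) = 0) :
    (1 / (n : ℝ)) * ∑ i : Fin n, entropy μ (X i) ≥
      (entropy μ I -
          (1 / (n.choose k : ℝ)) *
            ∑ J ∈ (Finset.univ : Finset (Fin n)).powersetCard k,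
              mutualInfo μ I (fun ω (i : {x // x ∈ J}) => X i.1 ω)) /
        ((n : ℝ) - k) := by
  set pc := (Finset.univ : Finset (Fin n)).powersetCard k with hpc
  set S' := ∑ i : Fin n, entropy μ (X i) with hS'
  set M := ∑ J ∈ pc, mutualInfo μ I (fun ω (i : {x // x ∈ J}) => X i.1 ω) with hM
  set HI := entropy μ I with hHI
  have hCpos : 0 < n.choose k := Nat.choose_pos hk.le
  have hC : (0:ℝ) < (n.choose k : ℝ) := by exact_mod_cast hCpos
  have hn : (0:ℝ) < (n:ℝ) := by
    have : 0 < n := (by omega : 0 < n)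
    exact_mod_cast this
  have hnk : (0:ℝ) < (n:ℝ) - k := by
    have : (k:ℝ) < n := by exact_mod_cast hk
    linarith
  have hcardpc : pc.card = n.choose k := by
    rw [hpc, Finset.card_powersetCard, Finset.card_univ, Fintype.card_fin]
  -- per-J bound, summed
  have hsum : ∑ J ∈ pc, (HI - mutualInfo μ I (fun ω (i : {x // x ∈ J}) => X i.1 ω))
      ≤ ∑ J ∈ pc, ∑ i ∈ univ \ J, entropy μ (X i) :=
    Finset.sum_le_sum fun J _ => step_J μ hμ0 hμ1 I X hdet J
  -- compute LHS of hsum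
  have hLHS : ∑ J ∈ pc, (HI - mutualInfo μ I (fun ω (i : {x // x ∈ J}) => X i.1 ω))
      = (n.choose k : ℝ) * HI - M := by
    rw [Finset.sum_sub_distrib, Finset.sum_const, hcardpc, ← hM, nsmul_eq_mul]
  -- compute RHS of hsum
  have hfilter : ∀ i : Fin n, pc.filter (fun J => i ∉ J)
      = (univ.erase i).powersetCard k := by
    intro i
    ext J
    simp only [hpc, Finset.mem_filter, Finset.mem_powersetCard, Finset.subset_erase]
    tauto
  have hcard2 : ∀ i : Fin n, (pc.filter (fun J => i ∉ J)).card = (n-1).choose k := by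
    intro i
    rw [hfilter i, Finset.card_powersetCard, Finset.card_erase_of_mem (mem_univ i),
      Finset.card_univ, Fintype.card_fin]
  have hRHS : ∑ J ∈ pc, ∑ i ∈ univ \ J, entropy μ (X i)
      = ((n-1).choose k : ℝ) * S' := by
    have e1 : ∀ J : Finset (Fin n), ∑ i ∈ univ \ J, entropy μ (X i)
        = ∑ i : Fin n, if i ∉ J then entropy μ (X i) else 0 := by
      intro J
      rw [Finset.sdiff_eq_filter, Finset.sum_filter]
    simp_rw [e1]
    rw [Finset.sum_comm]
    rw [hS', Finset.mul_sum]
    refine Finset.sum_congr rfl fun i _ => ?_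
    rw [← Finset.sum_filter, Finset.sum_const, hcard2 i, nsmul_eq_mul]
  have hmain : (n.choose k : ℝ) * HI - M ≤ ((n-1).choose k : ℝ) * S' := by
    rw [← hLHS, ← hRHS]; exact hsum
  -- choose identity
  have hid : ((n-1).choose k : ℝ) * (n:ℝ) = (n.choose k : ℝ) * ((n:ℝ) - k) := by
    have h1 : (n-1).choose k * ((n-1) + 1) = ((n-1)+1).choose k * ((n-1) + 1 - k) :=
      Nat.choose_mul_succ_eq (n-1) k
    have h2 : n - 1 + 1 = n := Nat.succ_pred_eq_of_pos ((by omega : 0 < n))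
    rw [h2] at h1
    have h3 : ((n-1).choose k * n : ℕ) = (n.choose k * (n - k) : ℕ) := h1
    have h4 : ((n - k : ℕ) : ℝ) = (n:ℝ) - k := by
      rw [Nat.cast_sub hk.le]
    calc ((n-1).choose k : ℝ) * (n:ℝ) = (((n-1).choose k * n : ℕ) : ℝ) := by push_cast; ring
      _ = ((n.choose k * (n - k) : ℕ) : ℝ) := by rw [h3]
      _ = (n.choose k : ℝ) * ((n:ℝ) - k) := by push_cast [Nat.cast_sub hk.le]; ring
  -- final algebra
  rw [ge_iff_le, div_le_iff₀ hnk]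
  have hfin : HI - (1 / (n.choose k : ℝ)) * M ≤ ((n-1).choose k : ℝ) * S' / (n.choose k : ℝ) := by
    rw [le_div_iff₀ hC]
    have : (HI - 1 / (n.choose k : ℝ) * M) * (n.choose k : ℝ)
        = (n.choose k : ℝ) * HI - M := by field_simp
    rw [this]
    exact hmain
  have heq : ((n-1).choose k : ℝ) * S' / (n.choose k : ℝ) = 1 / (n:ℝ) * S' * ((n:ℝ) - k) := by
    rw [div_eq_iff hC.ne']
    field_simp
    linear_combination S' * hid
  linarith [hfin, heq.symm.le]
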